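/- Let Γ : ℝ → ℝ³ be a C³ curve parametrized by arc length (|Γ'| = 1), and let v, j, γ, λ > 0 and q ∈ ℝ satisfy v²/j = (λ/γ)^{1−q}. Define x_t(z) = Γ(γz + vt), v_t(z) = v Γ'(γz + vt), s_t(z) = v Γ'(γz + vt) × Γ''(γz + vt). Then (x_t, v_t, s_t) solves: ∂_t x_t = v_t; ∂_t v_t = s_t × v_t; ∂_t s_t = (j λ^{1−q} |∂_z x_t|^q / v²) · v_t × ∂_z( ∂_z v_t / |∂_z x_t|³ ). -/

import Mathlib

open Matrix

def dot3 (u w : Fin 3 → ℝ) : ℝ := ∑ i, u i * w i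

noncomputable def norm3 (u : Fin 3 → ℝ) : ℝ := Real.sqrt (dot3 u u)

lemma hasDerivAt_cross {f g : ℝ → Fin 3 → ℝ} {f' g' : Fin 3 → ℝ} {x : ℝ}
    (hf : HasDerivAt f f' x) (hg : HasDerivAt g g' x) :
    HasDerivAt (fun t => f t ⨯₃ g t) (f' ⨯₃ g x + f x ⨯₃ g') x := by
  rw [hasDerivAt_pi] at hf hg ⊢
  intro i
  fin_cases i <;>
    [ (have := ((hf 1).mul (hg 2)).sub ((hf 2).mul (hg 1)));
      (have := ((hf 2).mul (hg 0)).sub ((hf 0).mul (hg 2)));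
      (have := ((hf 0).mul (hg 1)).sub ((hf 1).mul (hg 0)))] <;>
    · convert this using 1 <;> simp [cross_apply, Pi.mul_def, Pi.sub_def] <;> ring

lemma cross_cross_self' {a b : Fin 3 → ℝ} (h1 : dot3 a a = 1) (h2 : dot3 a b = 0) :
    (a ⨯₃ b) ⨯₃ a = b := by
  simp [dot3, Fin.sum_univ_three] at h1 h2
  funext i
  fin_cases i <;> simp [cross_apply] <;>
    [linear_combination b 0 * h1 - a 0 * h2;
     linear_combination b 1 * h1 - a 1 * h2;
     linear_combination b 2 * h1 - a 2 * h2]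

lemma smul_cross_smul (c c' : ℝ) (a b : Fin 3 → ℝ) :
    (c • a) ⨯₃ (c' • b) = (c * c') • (a ⨯₃ b) := by
  funext i; fin_cases i <;> simp [cross_apply] <;> ring

lemma norm3_smul (c : ℝ) (u : Fin 3 → ℝ) : norm3 (c • u) = |c| * norm3 u := by
  unfold norm3 dot3
  rw [show ∑ i, (c • u) i * (c • u) i = c ^ 2 * ∑ i, u i * u i by
    rw [Finset.mul_sum]; refine Finset.sum_congr rfl fun i _ => ?_; simp; ring]
  rw [Real.sqrt_mul (sq_nonneg c), Real.sqrt_sq_eq_abs]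

theorem line_flow_solution
    (Γ : ℝ → Fin 3 → ℝ) (hΓ : ContDiff ℝ 3 Γ)
    (harc : ∀ α, norm3 (deriv Γ α) = 1)
    (v j γ lam q : ℝ) (hv : 0 < v) (hj : 0 < j) (hγ : 0 < γ) (hlam : 0 < lam)
    (hrel : v ^ 2 / j = (lam / γ) ^ (1 - q)) :
    let x : ℝ → ℝ → Fin 3 → ℝ := fun t z => Γ (γ * z + v * t)
    let vf : ℝ → ℝ → Fin 3 → ℝ := fun t z => v • deriv Γ (γ * z + v * t)
    let sf : ℝ → ℝ → Fin 3 → ℝ := fun t z =>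
      v • (deriv Γ (γ * z + v * t) ⨯₃ deriv (deriv Γ) (γ * z + v * t))
    ∀ t z : ℝ,
      HasDerivAt (fun t' => x t' z) (vf t z) t ∧
      HasDerivAt (fun t' => vf t' z) (sf t z ⨯₃ vf t z) t ∧
      HasDerivAt (fun t' => sf t' z)
        ((j * lam ^ (1 - q) * (norm3 (deriv (fun z' => x t z') z)) ^ q / v ^ 2) •
          (vf t z ⨯₃
            deriv (fun z' =>
              ((norm3 (deriv (fun z'' => x t z'') z')) ^ 3)⁻¹ •
                deriv (fun z'' => vf t z'') z') z)) t := by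
  -- differentiability facts
  have hΓd : Differentiable ℝ Γ := hΓ.differentiable (by norm_num)
  have h2 : ContDiff ℝ 2 (deriv Γ) := by
    have := (contDiff_succ_iff_deriv (n := 2)).mp (show ContDiff ℝ (2 + 1) Γ by norm_num; exact hΓ)
    exact this.2.2
  have hΓd1 : Differentiable ℝ (deriv Γ) := h2.differentiable (by norm_num)
  have h1 : ContDiff ℝ 1 (deriv (deriv Γ)) := by
    have := (contDiff_succ_iff_deriv (n := 1)).mp (show ContDiff ℝ (1 + 1) (deriv Γ) by norm_num; exact h2)
    exact this.2.2
  have hΓd2 : Differentiable ℝ (deriv (deriv Γ)) := h1.differentiable (by norm_num)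
  have hd1 : ∀ α, HasDerivAt Γ (deriv Γ α) α := fun α => (hΓd α).hasDerivAt
  have hd2 : ∀ α, HasDerivAt (deriv Γ) (deriv (deriv Γ) α) α := fun α => (hΓd1 α).hasDerivAt
  have hd3 : ∀ α, HasDerivAt (deriv (deriv Γ)) (deriv (deriv (deriv Γ)) α) α :=
    fun α => (hΓd2 α).hasDerivAt
  -- arc-length facts
  have hdot1 : ∀ α, dot3 (deriv Γ α) (deriv Γ α) = 1 := fun α => by
    have := harc α; unfold norm3 at this
    nlinarith [Real.sq_sqrt (show (0:ℝ) ≤ dot3 (deriv Γ α) (deriv Γ α) by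
      unfold dot3; exact Finset.sum_nonneg fun i _ => mul_self_nonneg _)]
  have hdot2 : ∀ α, dot3 (deriv Γ α) (deriv (deriv Γ) α) = 0 := by
    intro α
    have hcomp := hasDerivAt_pi.1 (hd2 α)
    have hD : HasDerivAt (fun β => dot3 (deriv Γ β) (deriv Γ β))
        (2 * dot3 (deriv Γ α) (deriv (deriv Γ) α)) α := by
      have hs := HasDerivAt.fun_sum (fun i (_ : i ∈ Finset.univ) => ((hcomp i).fun_mul (hcomp i)))
      unfold dot3
      refine hs.congr_deriv ?_
      rw [Finset.mul_sum]
      exact Finset.sum_congr rfl fun i _ => by ring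
    have hconst : (fun β => dot3 (deriv Γ β) (deriv Γ β)) = fun _ => (1:ℝ) := by
      funext β
      have := harc β; unfold norm3 at this
      nlinarith [Real.sq_sqrt (show (0:ℝ) ≤ dot3 (deriv Γ β) (deriv Γ β) by
        unfold dot3; exact Finset.sum_nonneg fun i _ => mul_self_nonneg _)]
    rw [hconst] at hD
    have := hD.unique (hasDerivAt_const α 1)
    linarith
  intro x vf sf t z
  set A := γ * z + v * t with hA
  have haffT : HasDerivAt (fun t' => γ * z + v * t') v t := by
    simpa using ((hasDerivAt_id t).const_mul v).const_add (γ * z)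
  have haffZ : ∀ z', HasDerivAt (fun z'' => γ * z'' + v * t) γ z' := fun z' => by
    simpa using (((hasDerivAt_id z').const_mul γ).add_const (v * t))
  -- part 1
  have P1 : HasDerivAt (fun t' => x t' z) (vf t z) t := by
    show HasDerivAt (fun t' => Γ (γ * z + v * t')) (v • deriv Γ A) t
    exact (hd1 A).scomp t haffT
  refine ⟨P1, ?_, ?_⟩
  · -- part 2
    show HasDerivAt (fun t' => v • deriv Γ (γ * z + v * t')) (sf t z ⨯₃ vf t z) t
    have H2 : HasDerivAt (fun t' => v • deriv Γ (γ * z + v * t'))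
        (v • (v • deriv (deriv Γ) A)) t := ((hd2 A).scomp t haffT).const_smul v
    convert H2 using 1
    show (v • (deriv Γ A ⨯₃ deriv (deriv Γ) A)) ⨯₃ (v • deriv Γ A) = _
    rw [smul_cross_smul, cross_cross_self' (hdot1 A) (hdot2 A), smul_smul]
  · -- part 3
    have HL : HasDerivAt (fun t' => sf t' z)
        (v • ((v • deriv (deriv Γ) A) ⨯₃ deriv (deriv Γ) A +
          deriv Γ A ⨯₃ (v • deriv (deriv (deriv Γ)) A))) t := by
      show HasDerivAt (fun t' => v •
        (deriv Γ (γ * z + v * t') ⨯₃ deriv (deriv Γ) (γ * z + v * t'))) _ t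
      exact (hasDerivAt_cross ((hd2 A).scomp t haffT) ((hd3 A).scomp t haffT)).const_smul v
    convert HL using 1
    -- compute the spatial derivatives
    have derivX : ∀ z', deriv (fun z'' => x t z'') z' = γ • deriv Γ (γ * z' + v * t) :=
      fun z' => ((hd1 _).scomp z' (haffZ z')).deriv
    have normX : ∀ z', norm3 (deriv (fun z'' => x t z'') z') = γ := fun z' => by
      rw [derivX z', norm3_smul, harc, abs_of_pos hγ, mul_one]
    have derivV : ∀ z', deriv (fun z'' => vf t z'') z' =
        (v * γ) • deriv (deriv Γ) (γ * z' + v * t) := fun z' => by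
      have : HasDerivAt (fun z'' => vf t z'') (v • (γ • deriv (deriv Γ) (γ * z' + v * t))) z' :=
        ((hd2 _).scomp z' (haffZ z')).const_smul v
      rw [this.deriv, smul_smul]
    have hFeq : (fun z' => ((norm3 (deriv (fun z'' => x t z'') z')) ^ 3)⁻¹ •
        deriv (fun z'' => vf t z'') z') =
        fun z' => ((γ ^ 3)⁻¹ * (v * γ)) • deriv (deriv Γ) (γ * z' + v * t) := by
      funext z'
      rw [normX z', derivV z', smul_smul]
    have derivF : deriv (fun z' => ((norm3 (deriv (fun z'' => x t z'') z')) ^ 3)⁻¹ •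
        deriv (fun z'' => vf t z'') z') z =
        ((γ ^ 3)⁻¹ * (v * γ)) • (γ • deriv (deriv (deriv Γ)) A) := by
      rw [hFeq]
      exact (((hd3 A).scomp z (haffZ z)).const_smul ((γ ^ 3)⁻¹ * (v * γ))).deriv
    -- compute the scalar
    have hlq : (0:ℝ) < lam ^ (1 - q) := Real.rpow_pos_of_pos hlam _
    have hgq : (0:ℝ) < γ ^ (1 - q) := Real.rpow_pos_of_pos hγ _
    have hv2 : v ^ 2 = j * lam ^ (1 - q) / γ ^ (1 - q) := by
      have h := hrel
      rw [Real.div_rpow hlam.le hγ.le] at h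
      field_simp at h ⊢
      linarith
    have key : γ ^ q * γ ^ (1 - q) = γ := by
      rw [← Real.rpow_add hγ]; norm_num
    have hscal : j * lam ^ (1 - q) * γ ^ q / v ^ 2 = γ := by
      rw [hv2]
      field_simp
      linear_combination key
    rw [normX z, hscal, derivF]
    show γ • ((v • deriv Γ A) ⨯₃ _) = _
    funext i
    fin_cases i <;>
      simp [cross_apply, Pi.smul_apply, smul_eq_mul] <;>
      field_simp <;> ring
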